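/- Suppose Σ_{i=1}^n w_i ≤ M₁, Σ_{i=1}^n Σ_{j=1}^n |Cov(V_{i,t}, V_{j,t})| ≤ M₂ (so in particular E[V_{i,t}²] ≤ M₂ for every i, t), and E[Σ_{i=1}^n D_{i,t}²] ≤ M₄/t for all t ≥ 1. Then limsup_{T→∞} √T · E[ | (2/(T−t₀)) Σ_{t=t₀}^{T−1} Σ_{i=1}^n w_i V_{i,t+1} D_{i,t} | ] ≤ 4 M₁ √M₂ √M₄, where t₀ = t₀(T). -/

import Mathlib

open MeasureTheory ProbabilityTheory Filter Finset

/-- Covariance of two real-valued random variables. -/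
noncomputable def covar {Ω : Type*} [MeasurableSpace Ω] (μ : Measure Ω) (X Y : Ω → ℝ) : ℝ :=
  ∫ ω, (X ω - ∫ ω', X ω' ∂μ) * (Y ω - ∫ ω', Y ω' ∂μ) ∂μ

/-- The product of two L² functions is integrable. -/
lemma integrable_mul_of_memL2 {Ω : Type*} [MeasurableSpace Ω] {μ : Measure Ω}
    {f g : Ω → ℝ} (hf : MemLp f 2 μ) (hg : MemLp g 2 μ) :
    Integrable (fun ω => f ω * g ω) μ := by
  refine Integrable.mono' ((hf.integrable_sq.add hg.integrable_sq).div_const 2)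
    (hf.aestronglyMeasurable.mul hg.aestronglyMeasurable)
    (Filter.Eventually.of_forall fun ω => ?_)
  rw [Real.norm_eq_abs, abs_mul]
  simp only [Pi.add_apply]
  nlinarith [sq_nonneg (|f ω| - |g ω|), sq_abs (f ω), sq_abs (g ω),
    abs_nonneg (f ω), abs_nonneg (g ω)]

/-- Cauchy–Schwarz inequality for integrals of L² functions. -/
lemma integral_abs_mul_le_sqrt {Ω : Type*} [MeasurableSpace Ω] {μ : Measure Ω}
    {f g : Ω → ℝ} (hf : MemLp f 2 μ) (hg : MemLp g 2 μ) :
    ∫ ω, |f ω * g ω| ∂μ ≤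
      Real.sqrt (∫ ω, f ω ^ 2 ∂μ) * Real.sqrt (∫ ω, g ω ^ 2 ∂μ) := by
  set A := ∫ ω, f ω ^ 2 ∂μ with hAdef
  set B := ∫ ω, g ω ^ 2 ∂μ with hBdef
  set I := ∫ ω, |f ω * g ω| ∂μ with hIdef
  have hA : 0 ≤ A := integral_nonneg fun ω => sq_nonneg _
  have hB : 0 ≤ B := integral_nonneg fun ω => sq_nonneg _
  have hint : Integrable (fun ω => |f ω * g ω|) μ := (integrable_mul_of_memL2 hf hg).abs
  have key : ∀ a b : ℝ, 2 * (a * b) * I ≤ b ^ 2 * A + a ^ 2 * B := by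
    intro a b
    have h1 : ∫ ω, 2 * (a * b) * |f ω * g ω| ∂μ ≤
        ∫ ω, b ^ 2 * f ω ^ 2 + a ^ 2 * g ω ^ 2 ∂μ := by
      refine integral_mono (hint.const_mul _)
        ((hf.integrable_sq.const_mul _).add (hg.integrable_sq.const_mul _)) fun ω => ?_
      have habs : |f ω * g ω| = |f ω| * |g ω| := abs_mul _ _
      simp only [habs]
      nlinarith [sq_nonneg (b * |f ω| - a * |g ω|), sq_abs (f ω), sq_abs (g ω)]
    rwa [integral_const_mul,
      integral_add (hf.integrable_sq.const_mul _) (hg.integrable_sq.const_mul _),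
      integral_const_mul, integral_const_mul] at h1
  have hfin : ∀ ε : ℝ, 0 < ε → I ≤ (Real.sqrt A + ε) * (Real.sqrt B + ε) := by
    intro ε hε
    have ha : 0 < Real.sqrt A + ε := by positivity
    have hb : 0 < Real.sqrt B + ε := by positivity
    have hA' : A ≤ (Real.sqrt A + ε) ^ 2 := by
      nlinarith [Real.sq_sqrt hA, Real.sqrt_nonneg A]
    have hB' : B ≤ (Real.sqrt B + ε) ^ 2 := by
      nlinarith [Real.sq_sqrt hB, Real.sqrt_nonneg B]
    have h2 := key (Real.sqrt A + ε) (Real.sqrt B + ε)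
    nlinarith [mul_pos ha hb, sq_nonneg (Real.sqrt B + ε), sq_nonneg (Real.sqrt A + ε),
      mul_le_mul_of_nonneg_left hA' (sq_nonneg (Real.sqrt B + ε)),
      mul_le_mul_of_nonneg_left hB' (sq_nonneg (Real.sqrt A + ε))]
  have ht : Tendsto (fun ε : ℝ => (Real.sqrt A + ε) * (Real.sqrt B + ε))
      (nhdsWithin 0 (Set.Ioi 0)) (nhds (Real.sqrt A * Real.sqrt B)) := by
    have hc : Continuous fun ε : ℝ => (Real.sqrt A + ε) * (Real.sqrt B + ε) := by
      continuity
    have h0 := hc.tendsto 0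
    simp only [add_zero] at h0
    exact h0.mono_left nhdsWithin_le_nhds
  exact ge_of_tendsto ht (eventually_nhdsWithin_of_forall fun ε hε => hfin ε hε)

/-- Summing `1/√t` for `1 ≤ t ≤ N` gives at most `2√N`. -/
lemma sum_inv_sqrt_le (N : ℕ) :
    ∑ t ∈ Finset.Ico 1 (N + 1), (Real.sqrt t)⁻¹ ≤ 2 * Real.sqrt N := by
  induction N with
  | zero => simp
  | succ N ih =>
    rw [Finset.sum_Ico_succ_top (by omega)]
    have hb : 0 < Real.sqrt ((N : ℝ) + 1) := Real.sqrt_pos.mpr (by positivity)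
    have hb2 : Real.sqrt ((N : ℝ) + 1) ^ 2 = (N : ℝ) + 1 := Real.sq_sqrt (by positivity)
    have ha2 : Real.sqrt (N : ℝ) ^ 2 = (N : ℝ) := Real.sq_sqrt (Nat.cast_nonneg N)
    have hcast : ((N + 1 : ℕ) : ℝ) = (N : ℝ) + 1 := by push_cast; ring
    rw [hcast]
    have hkey : (Real.sqrt ((N : ℝ) + 1))⁻¹ ≤
        2 * Real.sqrt ((N : ℝ) + 1) - 2 * Real.sqrt (N : ℝ) := by
      rw [inv_eq_one_div, div_le_iff₀ hb]
      nlinarith [sq_nonneg (Real.sqrt (N : ℝ) - Real.sqrt ((N : ℝ) + 1))]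
    linarith

/-- Lemma 3 of the paper: under the weight bound `∑ wᵢ ≤ M₁`, the covariance bound
`∑ᵢ∑ⱼ |Cov(V_{i,t}, V_{j,t})| ≤ M₂` and the discrepancy bound `E[∑ᵢ D_{i,t}²] ≤ M₄/t`,
`limsup_T √T · E[ | (2/(T−t₀)) ∑_{t=t₀}^{T−1} ∑ᵢ wᵢ V_{i,t+1} D_{i,t} | ] ≤ 4 M₁ √M₂ √M₄`. -/
theorem statement2
    {Ω : Type*} [MeasurableSpace Ω] (μ : Measure Ω) [IsProbabilityMeasure μ]
    (n : ℕ) (hn : 1 ≤ n) (w : Fin n → ℝ) (hw : ∀ i, 0 < w i)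
    (V : ℕ → Ω → Fin n → ℝ) (hVmeas : ∀ t, Measurable (V t))
    (hV2 : ∀ t i, MemLp (fun ω => V t ω i) 2 μ)
    (hVindep : iIndepFun V μ)
    (hVid : ∀ s t, IdentDistrib (V s) (V t) μ μ)
    (hVmean : ∀ t i, (∫ ω, V t ω i ∂μ) = 0)
    (S : Matrix (Fin n) (Fin n) ℝ) (hSpd : S.PosDef)
    (hScov : ∀ t i j, covar μ (fun ω => V t ω i) (fun ω => V t ω j) = S i j)
    (D : ℕ → Ω → Fin n → ℝ)
    (hD2 : ∀ t i, MemLp (fun ω => D t ω i) 2 μ)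
    (t₀ : ℕ → ℕ) (ht₀ : ∀ T, 2 ≤ T → 1 ≤ t₀ T ∧ t₀ T ≤ T - 1)
    (ht₀lim : Tendsto (fun T : ℕ => (t₀ T : ℝ) / T) atTop (nhds 0))
    (M₁ M₂ M₄ : ℝ) (hM₁ : 0 < M₁) (hM₂ : 0 < M₂) (hM₄ : 0 < M₄)
    (hwsum : ∑ i, w i ≤ M₁)
    (hcov : ∀ t, ∑ i, ∑ j,
      |covar μ (fun ω => V t ω i) (fun ω => V t ω j)| ≤ M₂)
    (hDbound : ∀ t : ℕ, 1 ≤ t → (∫ ω, ∑ i, (D t ω i) ^ 2 ∂μ) ≤ M₄ / t) :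
    limsup (fun T : ℕ => Real.sqrt T *
      ∫ ω, |2 * ((T : ℝ) - (t₀ T : ℝ))⁻¹ *
          (∑ t ∈ Finset.Ico (t₀ T) T, ∑ i, w i * V (t + 1) ω i * D t ω i)| ∂μ)
      atTop ≤ 4 * M₁ * Real.sqrt M₂ * Real.sqrt M₄ := by
  set C : ℝ := M₁ * Real.sqrt M₂ * Real.sqrt M₄ with hCdef
  have hC : 0 < C := by positivity
  set F : ℕ → ℝ := fun T : ℕ => Real.sqrt T *
      ∫ ω, |2 * ((T : ℝ) - (t₀ T : ℝ))⁻¹ *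
          (∑ t ∈ Finset.Ico (t₀ T) T, ∑ i, w i * V (t + 1) ω i * D t ω i)| ∂μ with hFdef
  set G : ℕ → ℝ := fun T : ℕ => 4 * C * ((T : ℝ) / ((T : ℝ) - (t₀ T : ℝ))) with hGdef
  -- integrability of the individual terms
  have hint : ∀ (t : ℕ) (i : Fin n),
      Integrable (fun ω => w i * V (t + 1) ω i * D t ω i) μ := by
    intro t i
    have := (integrable_mul_of_memL2 (hV2 (t + 1) i) (hD2 t i)).const_mul (w i)
    simpa [mul_assoc] using this
  -- main per-T bound
  have main : ∀ T : ℕ, 2 ≤ T → F T ≤ G T := by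
    intro T hT
    obtain ⟨hk1, hk2⟩ := ht₀ T hT
    set k := t₀ T with hkdef
    have hk1T : k + 1 ≤ T := by omega
    have hTk : (0 : ℝ) < (T : ℝ) - (k : ℝ) := by
      have : ((k : ℝ) + 1) ≤ (T : ℝ) := by exact_mod_cast hk1T
      linarith
    -- pull out constant
    have hrw : (∫ ω, |2 * ((T : ℝ) - (k : ℝ))⁻¹ *
          (∑ t ∈ Finset.Ico k T, ∑ i, w i * V (t + 1) ω i * D t ω i)| ∂μ)
        = 2 * ((T : ℝ) - (k : ℝ))⁻¹ *
          ∫ ω, |∑ t ∈ Finset.Ico k T, ∑ i, w i * V (t + 1) ω i * D t ω i| ∂μ := by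
      rw [← integral_const_mul]
      refine integral_congr_ae (Filter.Eventually.of_forall fun ω => ?_)
      dsimp only
      rw [abs_mul, abs_of_pos (by positivity)]
    -- per-term Cauchy–Schwarz bound
    have hterm : ∀ t : ℕ, 1 ≤ t → ∀ i : Fin n,
        (∫ ω, |w i * V (t + 1) ω i * D t ω i| ∂μ)
          ≤ w i * (Real.sqrt M₂ * (Real.sqrt M₄ * (Real.sqrt t)⁻¹)) := by
      intro t ht1 i
      have hVsq : (∫ ω, V (t + 1) ω i ^ 2 ∂μ) ≤ M₂ := by
        have hc : covar μ (fun ω => V (t + 1) ω i) (fun ω => V (t + 1) ω i)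
            = ∫ ω, V (t + 1) ω i ^ 2 ∂μ := by
          simp only [covar, hVmean, sub_zero, sq]
        have hnn : 0 ≤ ∫ ω, V (t + 1) ω i ^ 2 ∂μ :=
          integral_nonneg fun ω => sq_nonneg _
        calc (∫ ω, V (t + 1) ω i ^ 2 ∂μ)
            = |covar μ (fun ω => V (t + 1) ω i) (fun ω => V (t + 1) ω i)| := by
              rw [hc, abs_of_nonneg hnn]
          _ ≤ ∑ j, |covar μ (fun ω => V (t + 1) ω i) (fun ω => V (t + 1) ω j)| :=
              Finset.single_le_sum
                (f := fun j => |covar μ (fun ω => V (t + 1) ω i) (fun ω => V (t + 1) ω j)|)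
                (fun j _ => abs_nonneg _) (Finset.mem_univ i)
          _ ≤ ∑ i', ∑ j, |covar μ (fun ω => V (t + 1) ω i') (fun ω => V (t + 1) ω j)| :=
              Finset.single_le_sum
                (f := fun i' => ∑ j, |covar μ (fun ω => V (t + 1) ω i') (fun ω => V (t + 1) ω j)|)
                (fun i' _ => Finset.sum_nonneg fun j _ => abs_nonneg _) (Finset.mem_univ i)
          _ ≤ M₂ := hcov (t + 1)
      have hDsq : (∫ ω, D t ω i ^ 2 ∂μ) ≤ M₄ / t := by
        calc (∫ ω, D t ω i ^ 2 ∂μ)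
            ≤ ∫ ω, ∑ j, D t ω j ^ 2 ∂μ := by
              refine integral_mono (hD2 t i).integrable_sq
                (integrable_finset_sum _ fun j _ => (hD2 t j).integrable_sq) fun ω => ?_
              exact Finset.single_le_sum (f := fun j => D t ω j ^ 2)
                (fun j _ => sq_nonneg _) (Finset.mem_univ i)
          _ ≤ M₄ / t := hDbound t ht1
      have hcs := integral_abs_mul_le_sqrt (hV2 (t + 1) i) (hD2 t i)
      have hsq1 : Real.sqrt (∫ ω, V (t + 1) ω i ^ 2 ∂μ) ≤ Real.sqrt M₂ :=
        Real.sqrt_le_sqrt hVsq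
      have hsq2 : Real.sqrt (∫ ω, D t ω i ^ 2 ∂μ) ≤ Real.sqrt M₄ * (Real.sqrt t)⁻¹ := by
        have : Real.sqrt (M₄ / t) = Real.sqrt M₄ / Real.sqrt t := Real.sqrt_div hM₄.le _
        calc Real.sqrt (∫ ω, D t ω i ^ 2 ∂μ) ≤ Real.sqrt (M₄ / t) := Real.sqrt_le_sqrt hDsq
          _ = Real.sqrt M₄ * (Real.sqrt t)⁻¹ := by rw [this, div_eq_mul_inv]
      have habs : (∫ ω, |w i * V (t + 1) ω i * D t ω i| ∂μ)
          = w i * ∫ ω, |V (t + 1) ω i * D t ω i| ∂μ := by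
        rw [← integral_const_mul]
        refine integral_congr_ae (Filter.Eventually.of_forall fun ω => ?_)
        dsimp only
        rw [mul_assoc, abs_mul, abs_of_pos (hw i)]
      rw [habs]
      refine mul_le_mul_of_nonneg_left ?_ (hw i).le
      calc (∫ ω, |V (t + 1) ω i * D t ω i| ∂μ)
          ≤ Real.sqrt (∫ ω, V (t + 1) ω i ^ 2 ∂μ) * Real.sqrt (∫ ω, D t ω i ^ 2 ∂μ) := hcs
        _ ≤ Real.sqrt M₂ * (Real.sqrt M₄ * (Real.sqrt t)⁻¹) :=
            mul_le_mul hsq1 hsq2 (Real.sqrt_nonneg _) (Real.sqrt_nonneg _)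
    -- bound the integral of the absolute sum
    have hSbound : (∫ ω, |∑ t ∈ Finset.Ico k T, ∑ i, w i * V (t + 1) ω i * D t ω i| ∂μ)
        ≤ C * (2 * Real.sqrt T) := by
      have step1 : (∫ ω, |∑ t ∈ Finset.Ico k T, ∑ i, w i * V (t + 1) ω i * D t ω i| ∂μ)
          ≤ ∑ t ∈ Finset.Ico k T, ∑ i, ∫ ω, |w i * V (t + 1) ω i * D t ω i| ∂μ := by
        have hi1 : Integrable (fun ω =>
            |∑ t ∈ Finset.Ico k T, ∑ i, w i * V (t + 1) ω i * D t ω i|) μ :=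
          (integrable_finset_sum _ fun t _ =>
            integrable_finset_sum _ fun i _ => hint t i).abs
        have hi2 : Integrable (fun ω =>
            ∑ t ∈ Finset.Ico k T, ∑ i, |w i * V (t + 1) ω i * D t ω i|) μ :=
          integrable_finset_sum _ fun t _ =>
            integrable_finset_sum _ fun i _ => (hint t i).abs
        calc (∫ ω, |∑ t ∈ Finset.Ico k T, ∑ i, w i * V (t + 1) ω i * D t ω i| ∂μ)
            ≤ ∫ ω, ∑ t ∈ Finset.Ico k T, ∑ i, |w i * V (t + 1) ω i * D t ω i| ∂μ := by
              refine integral_mono hi1 hi2 fun ω => ?_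
              exact (Finset.abs_sum_le_sum_abs _ _).trans
                (Finset.sum_le_sum fun t _ => Finset.abs_sum_le_sum_abs _ _)
          _ = ∑ t ∈ Finset.Ico k T, ∑ i, ∫ ω, |w i * V (t + 1) ω i * D t ω i| ∂μ := by
              rw [integral_finset_sum _ fun t _ =>
                integrable_finset_sum _ fun i _ => (hint t i).abs]
              exact Finset.sum_congr rfl fun t _ =>
                integral_finset_sum _ fun i _ => (hint t i).abs
      have step2 : ∑ t ∈ Finset.Ico k T, ∑ i, (∫ ω, |w i * V (t + 1) ω i * D t ω i| ∂μ)
          ≤ ∑ t ∈ Finset.Ico k T, M₁ * (Real.sqrt M₂ * (Real.sqrt M₄ * (Real.sqrt t)⁻¹)) := by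
        refine Finset.sum_le_sum fun t htmem => ?_
        have ht1 : 1 ≤ t := le_trans hk1 (Finset.mem_Ico.mp htmem).1
        calc ∑ i, (∫ ω, |w i * V (t + 1) ω i * D t ω i| ∂μ)
            ≤ ∑ i, w i * (Real.sqrt M₂ * (Real.sqrt M₄ * (Real.sqrt t)⁻¹)) :=
              Finset.sum_le_sum fun i _ => hterm t ht1 i
          _ = (∑ i, w i) * (Real.sqrt M₂ * (Real.sqrt M₄ * (Real.sqrt t)⁻¹)) := by
              rw [Finset.sum_mul]
          _ ≤ M₁ * (Real.sqrt M₂ * (Real.sqrt M₄ * (Real.sqrt t)⁻¹)) := by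
              refine mul_le_mul_of_nonneg_right hwsum ?_
              positivity
      have step3 : ∑ t ∈ Finset.Ico k T, M₁ * (Real.sqrt M₂ * (Real.sqrt M₄ * (Real.sqrt t)⁻¹))
          ≤ C * (2 * Real.sqrt T) := by
        have hsub : Finset.Ico k T ⊆ Finset.Ico 1 T := by
          intro t htmem
          rw [Finset.mem_Ico] at htmem ⊢
          exact ⟨le_trans hk1 htmem.1, htmem.2⟩
        have hsum1 : ∑ t ∈ Finset.Ico k T, (Real.sqrt t)⁻¹
            ≤ ∑ t ∈ Finset.Ico 1 T, (Real.sqrt t)⁻¹ :=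
          Finset.sum_le_sum_of_subset_of_nonneg hsub fun t _ _ => by positivity
        have hsum2 : ∑ t ∈ Finset.Ico 1 T, (Real.sqrt t)⁻¹ ≤ 2 * Real.sqrt T := by
          obtain ⟨N, rfl⟩ : ∃ N, T = N + 1 := ⟨T - 1, by omega⟩
          calc ∑ t ∈ Finset.Ico 1 (N + 1), (Real.sqrt t)⁻¹
              ≤ 2 * Real.sqrt N := sum_inv_sqrt_le N
            _ ≤ 2 * Real.sqrt ((N + 1 : ℕ) : ℝ) := by
                refine mul_le_mul_of_nonneg_left (Real.sqrt_le_sqrt ?_) (by norm_num)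
                push_cast; linarith
        calc ∑ t ∈ Finset.Ico k T, M₁ * (Real.sqrt M₂ * (Real.sqrt M₄ * (Real.sqrt t)⁻¹))
            = C * ∑ t ∈ Finset.Ico k T, (Real.sqrt t)⁻¹ := by
              rw [Finset.mul_sum]
              exact Finset.sum_congr rfl fun t _ => by rw [hCdef]; ring
          _ ≤ C * (2 * Real.sqrt T) := by
              refine mul_le_mul_of_nonneg_left (hsum1.trans hsum2) hC.le
      exact step1.trans (step2.trans step3)
    -- combine
    have hcomb : F T ≤ Real.sqrt T * (2 * ((T : ℝ) - (k : ℝ))⁻¹ * (C * (2 * Real.sqrt T))) := by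
      rw [hFdef]
      dsimp only
      rw [hrw]
      refine mul_le_mul_of_nonneg_left ?_ (Real.sqrt_nonneg _)
      refine mul_le_mul_of_nonneg_left hSbound ?_
      positivity
    have hsqT : Real.sqrt T * Real.sqrt T = (T : ℝ) := Real.mul_self_sqrt (Nat.cast_nonneg T)
    have heq : Real.sqrt T * (2 * ((T : ℝ) - (k : ℝ))⁻¹ * (C * (2 * Real.sqrt T))) = G T := by
      rw [hGdef]
      dsimp only
      rw [div_eq_mul_inv]
      linear_combination (4 * C * ((T : ℝ) - (k : ℝ))⁻¹) * hsqT
    rw [← heq]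
    exact hcomb
  -- limit of G
  have hGlim : Tendsto G atTop (nhds (4 * C)) := by
    have h1 : Tendsto (fun T : ℕ => 1 - (t₀ T : ℝ) / T) atTop (nhds 1) := by
      have h0 : Tendsto (fun _ : ℕ => (1 : ℝ)) atTop (nhds 1) := tendsto_const_nhds
      simpa using h0.sub ht₀lim
    have h2 : Tendsto (fun T : ℕ => (1 - (t₀ T : ℝ) / T)⁻¹) atTop (nhds 1) := by
      simpa using h1.inv₀ one_ne_zero
    have h3 : Tendsto (fun T : ℕ => (T : ℝ) / ((T : ℝ) - (t₀ T : ℝ))) atTop (nhds 1) := by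
      refine h2.congr' ?_
      filter_upwards [eventually_ge_atTop 1] with T hT
      have hT0 : (T : ℝ) ≠ 0 := by
        have : (1 : ℝ) ≤ (T : ℝ) := by exact_mod_cast hT
        linarith
      rw [one_sub_div hT0, inv_div]
    have := h3.const_mul (4 * C)
    simpa [hGdef, mul_comm] using this
  -- conclude via limsup comparison
  have hFG : ∀ᶠ T in atTop, F T ≤ G T := by
    filter_upwards [eventually_ge_atTop 2] with T hT
    exact main T hT
  have hF0 : ∀ T, 0 ≤ F T := fun T =>
    mul_nonneg (Real.sqrt_nonneg _) (integral_nonneg fun ω => abs_nonneg _)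
  have hFcb : IsCoboundedUnder (· ≤ ·) atTop F :=
    isCoboundedUnder_le_of_eventually_le atTop
      (Filter.Eventually.of_forall fun T => hF0 T)
  have hGbd : IsBoundedUnder (· ≤ ·) atTop G := hGlim.isBoundedUnder_le
  calc limsup F atTop ≤ limsup G atTop := limsup_le_limsup hFG hFcb hGbd
    _ = 4 * C := hGlim.limsup_eq
    _ = 4 * M₁ * Real.sqrt M₂ * Real.sqrt M₄ := by rw [hCdef]; ring
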